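/- Fix a category C and positive integers d and d'. There is a bijection (an Equiv) between the set of functors F : (G//G for (ZMod 2)^d) ⥤ C that are color-constant with respect to w∘π, and the set of functors F' : (G//G for (ZMod 2)^{d'}) ⥤ C that are color-constant with respect to w∘π. (Equivalently, there is a one-to-one correspondence between morphism-colored functors from H(d, 2) to the discrete morphism-colored category (C, id) and morphism-colored functors from H(d', 2) to (C, id).) -/

import Mathlib

open CategoryTheory

universe v u

/-- The type of morphisms of a category, bundled with their endpoints. -/
abbrev Mor (C : Type u) [Category.{v} C] : Type (max u v) := Σ X Y : C, X ⟶ Y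

/-- A nonempty composable sequence of morphisms from `X` to `Y`. -/
inductive Chain (C : Type u) [Category.{v} C] : C → C → Type (max u v) where
  | single {X Y : C} (f : X ⟶ Y) : Chain C X Y
  | cons {X Y Z : C} (f : X ⟶ Y) (rest : Chain C Y Z) : Chain C X Z

/-- The composite of a composable sequence of morphisms. -/
def Chain.comp {C : Type u} [Category.{v} C] : ∀ {X Y : C}, Chain C X Y → (X ⟶ Y)
  | _, _, .single f => f
  | _, _, .cons f rest => f ≫ rest.comp

/-- The list of colors of a composable sequence of morphisms. -/
def Chain.colors {C : Type u} [Category.{v} C] {I : Type*} (ℓ : Mor C → I) :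
    ∀ {X Y : C}, Chain C X Y → List I
  | _, _, .single f => [ℓ ⟨_, _, f⟩]
  | _, _, .cons f rest => ℓ ⟨_, _, f⟩ :: rest.colors ℓ

/-- The relation `∼¹` on colors: `a ∼¹ b` iff there are composable sequences
of morphisms, of the same length and with componentwise equal colors,
whose composites have colors `a` and `b` respectively. -/
def Sim1 {C : Type u} [Category.{v} C] {I : Type*} (ℓ : Mor C → I) (a b : I) : Prop :=
  ∃ (X Y X' Y' : C) (c : Chain C X Y) (c' : Chain C X' Y'),
    c.colors ℓ = c'.colors ℓ ∧ a = ℓ ⟨X, Y, c.comp⟩ ∧ b = ℓ ⟨X', Y', c'.comp⟩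

/-- A functor is color-constant if it sends morphisms of equal color to equal morphisms. -/
def ColorConstant {C : Type u} [Category.{v} C] {D : Type*} [Category D] {I : Type*}
    (ℓ : Mor C → I) (F : C ⥤ D) : Prop :=
  ∀ {X Y X' Y' : C} (f : X ⟶ Y) (g : X' ⟶ Y'),
    ℓ ⟨X, Y, f⟩ = ℓ ⟨X', Y', g⟩ →
    (⟨F.obj X, F.obj Y, F.map f⟩ : Mor D) = ⟨F.obj X', F.obj Y', F.map g⟩

/-- The Hamming weight of a vector in `(ZMod n)^d`. -/
def hWeight {n d : ℕ} (x : Fin d → ZMod n) : ℕ :=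
  (Finset.univ.filter fun i => x i ≠ 0).card

/-- The objects of the action groupoid `G ∕∕ G` for `G = (ZMod n)^d`. -/
abbrev HammingObj (n d : ℕ) : Type := Fin d → ZMod n

/-- The action groupoid `G ∕∕ G` for `G = (ZMod n)^d` acting on itself by
translation: a morphism from `x` to `y` is a pair `(g, x)` with `y = g + x`. -/
instance HammingGroupoid (n d : ℕ) : Groupoid (HammingObj n d) where
  Hom x y := {g : Fin d → ZMod n // y = g + x}
  id x := ⟨0, by simp⟩
  comp {x y z} f g := ⟨g.1 + f.1, by obtain ⟨gv, rfl⟩ := g; obtain ⟨fv, rfl⟩ := f; rw [add_assoc]⟩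
  id_comp {x y} f := by apply Subtype.ext; simp
  comp_id {x y} f := by apply Subtype.ext; simp
  assoc {w x y z} f g h := by apply Subtype.ext; simp [add_assoc]
  inv {x y} f := ⟨-f.1, by obtain ⟨fv, rfl⟩ := f; simp⟩
  inv_comp {x y} f := by apply Subtype.ext; simp
  comp_inv {x y} f := by apply Subtype.ext; simp

/-- The coloring `w ∘ π` of the Hamming schemoid `H(d, n)`: a morphism
`(g, x)` is colored by the Hamming weight `w(g)`. -/
def hColor (n d : ℕ) : Mor (HammingObj n d) → ℕ :=
  fun m => hWeight m.2.2.1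

universe v' u'

section Aux

variable {D : Type u'} [Category.{v'} D]

lemma mor_ext {A B A' B' : D} {u : A ⟶ B} {u' : A' ⟶ B'}
    (h : (⟨A, B, u⟩ : Mor D) = ⟨A', B', u'⟩) :
    ∃ (hA : A' = A) (hB : B = B'), u' = eqToHom hA ≫ u ≫ eqToHom hB := by
  obtain ⟨hA, h2⟩ := Sigma.mk.inj_iff.mp h
  subst hA
  obtain ⟨hB, h3⟩ := Sigma.mk.inj_iff.mp (eq_of_heq h2)
  subst hB
  exact ⟨rfl, rfl, by simpa using (eq_of_heq h3).symm⟩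

/-- Iterated composition of an endomorphism. -/
def epow {X : D} (e : X ⟶ X) : ℕ → (X ⟶ X)
  | 0 => 𝟙 X
  | n + 1 => e ≫ epow e n

lemma epow_add {X : D} (e : X ⟶ X) (a b : ℕ) :
    epow e (a + b) = epow e a ≫ epow e b := by
  induction a with
  | zero => simp [epow]
  | succ n ih =>
      have : n + 1 + b = (n + b) + 1 := by omega
      rw [this]
      simp only [epow, ih, Category.assoc]

lemma epow_two_mul {X : D} (e : X ⟶ X) (he : e ≫ e = 𝟙 X) (n : ℕ) :
    epow e (2 * n) = 𝟙 X := by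
  induction n with
  | zero => rfl
  | succ n ih =>
      have : 2 * (n + 1) = 2 + 2 * n := by omega
      rw [this, epow_add, ih]
      simp [epow, he]

lemma epow_parity {X : D} (e : X ⟶ X) (he : e ≫ e = 𝟙 X) {a b : ℕ}
    (hab : a % 2 = b % 2) : epow e a = epow e b := by
  have ha : a = 2 * (a / 2) + a % 2 := (Nat.div_add_mod a 2).symm
  have hb : b = 2 * (b / 2) + b % 2 := (Nat.div_add_mod b 2).symm
  rw [ha, hb, epow_add, epow_add, epow_two_mul e he, epow_two_mul e he, hab]

end Aux

lemma zmod2_cases : ∀ a : ZMod 2, a = 0 ∨ a = 1 := by decide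

lemma hWeight_cast {d : ℕ} (x : Fin d → ZMod 2) :
    ((hWeight x : ℕ) : ZMod 2) = ∑ i, x i := by
  have : ∀ a : ZMod 2, (if a ≠ 0 then (1 : ZMod 2) else 0) = a := by decide
  rw [hWeight, Finset.card_filter]
  push_cast
  refine Finset.sum_congr rfl fun i _ => ?_
  rw [← this (x i)]
  split <;> simp

lemma hWeight_add_parity {d : ℕ} (g h : Fin d → ZMod 2) :
    hWeight (g + h) % 2 = (hWeight g + hWeight h) % 2 := by
  have : ((hWeight (g + h) : ℕ) : ZMod 2) = ((hWeight g + hWeight h : ℕ) : ZMod 2) := by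
    push_cast
    rw [hWeight_cast, hWeight_cast, hWeight_cast, ← Finset.sum_add_distrib]
    rfl
  exact (ZMod.natCast_eq_natCast_iff _ _ _).mp this

lemma hWeight_zero {d : ℕ} : hWeight (0 : Fin d → ZMod 2) = 0 := by
  simp [hWeight]

lemma hWeight_eq_zero {d : ℕ} {x : Fin d → ZMod 2} (h : hWeight x = 0) : x = 0 := by
  rw [hWeight, Finset.card_eq_zero, Finset.filter_eq_empty_iff] at h
  funext i
  simpa using h (Finset.mem_univ i)

section Main

variable {C : Type u'} [Category.{v'} C]

/-- The canonical functor from the Hamming groupoid given by an involution. -/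
def mkF (d : ℕ) (X : C) (e : X ⟶ X) (he : e ≫ e = 𝟙 X) :
    HammingObj 2 d ⥤ C where
  obj _ := X
  map f := epow e (hWeight f.1)
  map_id x := by
    show epow e (hWeight (0 : Fin d → ZMod 2)) = 𝟙 X
    rw [hWeight_zero]; rfl
  map_comp {x y z} f g := by
    show epow e (hWeight (g.1 + f.1)) = epow e (hWeight f.1) ≫ epow e (hWeight g.1)
    rw [← epow_add]
    refine epow_parity e he ?_
    rw [hWeight_add_parity, Nat.add_comm]

lemma mkF_cc (d : ℕ) (X : C) (e : X ⟶ X) (he : e ≫ e = 𝟙 X) :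
    ColorConstant (hColor 2 d) (mkF d X e he) := by
  intro x y x' y' f g hfg
  have : hWeight f.1 = hWeight g.1 := hfg
  show (⟨X, X, epow e (hWeight f.1)⟩ : Mor C) = ⟨X, X, epow e (hWeight g.1)⟩
  rw [this]

variable {d : ℕ} (hd : 1 ≤ d)

/-- The canonical weight-one vector. -/
def wt1vec (d : ℕ) (hd : 1 ≤ d) : Fin d → ZMod 2 :=
  fun i => if i = ⟨0, hd⟩ then 1 else 0

lemma hWeight_wt1vec : hWeight (wt1vec d hd) = 1 := by
  rw [hWeight]
  convert Finset.card_singleton (⟨0, hd⟩ : Fin d)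
  ext i
  by_cases hi : i = ⟨0, hd⟩ <;> simp [wt1vec, hi]

/-- The canonical weight-one morphism from `0`. -/
def m1 (d : ℕ) (hd : 1 ≤ d) :
    (0 : HammingObj 2 d) ⟶ (wt1vec d hd : HammingObj 2 d) :=
  ⟨wt1vec d hd, (add_zero _).symm⟩

variable {F : HammingObj 2 d ⥤ C} (hF : ColorConstant (hColor 2 d) F)

include hF in
lemma obj_const (x : HammingObj 2 d) : F.obj x = F.obj 0 := by
  have h := hF (𝟙 x) (𝟙 (0 : HammingObj 2 d)) rfl
  exact (mor_ext h).choose.symm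

/-- The endomorphism extracted from a color-constant functor. -/
def extE : F.obj (0 : HammingObj 2 d) ⟶ F.obj (0 : HammingObj 2 d) :=
  F.map (m1 d hd) ≫ eqToHom (obj_const hF (wt1vec d hd))

include hF in
lemma map_eq (k : ℕ) :
    ∀ {x y : HammingObj 2 d} (f : x ⟶ y), hWeight f.1 = k →
      F.map f = eqToHom (obj_const hF x) ≫ epow (extE hd hF) k ≫
        eqToHom (obj_const hF y).symm := by
  induction k with
  | zero =>
      intro x y f hf
      have h1 : f.1 = 0 := hWeight_eq_zero hf
      have hyx : y = x := by rw [f.2, h1, zero_add]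
      subst hyx
      have hfe : f = 𝟙 y := by
        apply Subtype.ext
        show f.1 = 0
        exact h1
      rw [hfe]
      simp [epow]
  | succ k ih =>
      intro x y f hf
      -- pick an index in the support
      have hne : (Finset.univ.filter fun i => f.1 i ≠ 0).Nonempty := by
        rw [← Finset.card_pos, ← hWeight]; omega
      obtain ⟨i, hi⟩ := hne
      have hfi : f.1 i ≠ 0 := (Finset.mem_filter.mp hi).2
      have hfi1 : f.1 i = 1 := (zmod2_cases (f.1 i)).resolve_left hfi
      set δ : Fin d → ZMod 2 := fun j => if j = i then 1 else 0 with hδ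
      have hδδ : δ + δ = 0 := by
        funext j; simp only [Pi.add_apply, Pi.zero_apply]
        exact CharTwo.add_self_eq_zero _
      have hwδ : hWeight δ = 1 := by
        rw [hWeight]
        convert Finset.card_singleton i
        ext j
        by_cases hj : j = i <;> simp [hδ, hj]
      -- the two factors
      let f₁ : x ⟶ (δ + x : HammingObj 2 d) := ⟨δ, rfl⟩
      let f₂ : (δ + x : HammingObj 2 d) ⟶ y :=
        ⟨f.1 + δ, by
          have hh : f.1 + δ + (δ + x) = f.1 + x := by
            rw [add_assoc, ← add_assoc δ δ x, hδδ, zero_add]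
          rw [hh]; exact f.2⟩
      have hcomp : f = f₁ ≫ f₂ := by
        apply Subtype.ext
        show f.1 = (f.1 + δ) + δ
        rw [add_assoc, hδδ, add_zero]
      have hw2 : hWeight (f.1 + δ) = k := by
        have hfe : (Finset.univ.filter fun j => (f.1 + δ) j ≠ 0)
            = (Finset.univ.filter fun j => f.1 j ≠ 0).erase i := by
          ext j
          by_cases hj : j = i
          · subst hj
            have h2 : f.1 j + δ j = 0 := by
              simp only [hδ, if_pos rfl, hfi1]
              decide
            simp [h2]
          · simp [hδ, hj]
        rw [hWeight, hfe, Finset.card_erase_of_mem hi, ← hWeight, hf]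
        omega
      -- weight-one morphisms agree with m1
      have hcc := hF (m1 d hd) f₁
        (show hWeight (wt1vec d hd) = hWeight δ by rw [hWeight_wt1vec, hwδ])
      obtain ⟨hA, hB, hmap⟩ := mor_ext hcc
      have hmap2 := ih f₂ hw2
      rw [hcomp, F.map_comp, hmap, hmap2,
        show epow (extE hd hF) (k + 1) = extE hd hF ≫ epow (extE hd hF) k from rfl]
      delta extE
      simp
  
include hF in
lemma extE_invol : extE hd hF ≫ extE hd hF = 𝟙 (F.obj (0 : HammingObj 2 d)) := by
  -- the inverse morphism of m1
  let m1' : (wt1vec d hd : HammingObj 2 d) ⟶ (0 : HammingObj 2 d) :=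
    ⟨wt1vec d hd, by
      show (0 : HammingObj 2 d) = wt1vec d hd + wt1vec d hd
      funext j
      exact (CharTwo.add_self_eq_zero _).symm⟩
  have hid : m1 d hd ≫ m1' = 𝟙 (0 : HammingObj 2 d) := by
    apply Subtype.ext
    show wt1vec d hd + wt1vec d hd = 0
    funext j
    exact CharTwo.add_self_eq_zero _
  have h1 : F.map m1' = eqToHom (obj_const hF (wt1vec d hd)) ≫
      epow (extE hd hF) 1 ≫ eqToHom (obj_const hF (0 : HammingObj 2 d)).symm :=
    map_eq hd hF 1 m1' (hWeight_wt1vec hd)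
  have h2 : F.map (m1 d hd) ≫ F.map m1' = 𝟙 _ := by
    rw [← F.map_comp, hid, F.map_id]
  rw [h1] at h2
  show (F.map (m1 d hd) ≫ eqToHom (obj_const hF (wt1vec d hd))) ≫
    (F.map (m1 d hd) ≫ eqToHom (obj_const hF (wt1vec d hd))) = _
  calc (F.map (m1 d hd) ≫ eqToHom (obj_const hF (wt1vec d hd))) ≫
      (F.map (m1 d hd) ≫ eqToHom (obj_const hF (wt1vec d hd)))
      = F.map (m1 d hd) ≫ (eqToHom (obj_const hF (wt1vec d hd)) ≫
        (extE hd hF) ≫ eqToHom (obj_const hF (0 : HammingObj 2 d)).symm) := by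
        delta extE; simp
    _ = F.map (m1 d hd) ≫ (eqToHom (obj_const hF (wt1vec d hd)) ≫
        epow (extE hd hF) 1 ≫ eqToHom (obj_const hF (0 : HammingObj 2 d)).symm) := by
        simp [epow]
    _ = 𝟙 _ := h2

/-- Color-constant functors from the Hamming groupoid correspond to involutions. -/
noncomputable def ccEquiv (d : ℕ) (hd : 1 ≤ d) :
    {F : HammingObj 2 d ⥤ C // ColorConstant (hColor 2 d) F} ≃
      (Σ X : C, {e : X ⟶ X // e ≫ e = 𝟙 X}) where
  toFun := fun ⟨F, hF⟩ => ⟨F.obj 0, extE hd hF, extE_invol hd hF⟩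
  invFun := fun ⟨X, e, he⟩ => ⟨mkF d X e he, mkF_cc d X e he⟩
  left_inv := by
    rintro ⟨F, hF⟩
    apply Subtype.ext
    show mkF d (F.obj 0) (extE hd hF) (extE_invol hd hF) = F
    refine CategoryTheory.Functor.ext (fun x => (obj_const hF x).symm) ?_
    intro x y f
    have := map_eq hd hF (hWeight f.1) f rfl
    rw [this]
    show epow (extE hd hF) (hWeight f.1) = _
    simp only [Category.assoc, eqToHom_trans_assoc, eqToHom_trans]
    show _ = eqToHom (obj_const hF x).symm ≫ eqToHom (obj_const hF x) ≫ _ ≫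
      eqToHom (rfl : F.obj 0 = F.obj 0)
    rw [eqToHom_trans_assoc]
    simp
  right_inv := by
    rintro ⟨X, e, he⟩
    show (⟨X, _, _⟩ : Σ X : C, {e : X ⟶ X // e ≫ e = 𝟙 X}) = ⟨X, e, he⟩
    congr 1
    apply Subtype.ext
    show (mkF d X e he).map (m1 d hd) ≫
      eqToHom (obj_const (mkF_cc d X e he) (wt1vec d hd)) = e
    have h1 : (mkF d X e he).map (m1 d hd) = epow e 1 := by
      show epow e (hWeight (wt1vec d hd)) = epow e 1
      rw [hWeight_wt1vec]
    rw [h1]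
    show epow e 1 ≫ eqToHom (rfl : X = X) = e
    rw [eqToHom_refl, Category.comp_id]
    simp [epow]

end Main

/-- For positive integers `d, d'`, color-constant functors from
`H(d, 2)` to a category `C` correspond bijectively to color-constant functors
from `H(d', 2)` to `C`. -/
theorem stmt18 (C : Type u') [Category.{v'} C]
    (d d' : ℕ) (hd : 1 ≤ d) (hd' : 1 ≤ d') :
    Nonempty
      ({F : HammingObj 2 d ⥤ C // ColorConstant (hColor 2 d) F} ≃
        {F' : HammingObj 2 d' ⥤ C // ColorConstant (hColor 2 d') F'}) := by
  exact ⟨(ccEquiv d hd).trans (ccEquiv d' hd').symm⟩
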